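/- With the same setup, for every m ∈ ℤ one has S_m(E-F) = ∑_{p=0}^{rk F} c_p(F^∨) ∑_{q=0}^{p} C(p,q) β^q S_{m-p+q}(E), where c_p(F^∨) is the p-th elementary symmetric polynomial in the elements ȳ_j = -y_j/(1+βy_j) for Chern roots y_j of F, and C(p,q) denotes the binomial coefficient. -/

import Mathlib

namespace Segre

variable (R : Type*) [CommRing R]

/-- `v = βu⁻¹` and `u`: the Segre series lives in `R[[v,u]]` (`β = uv`). -/
noncomputable def v : MvPowerSeries (Fin 2) R := MvPowerSeries.X 0
noncomputable def u : MvPowerSeries (Fin 2) R := MvPowerSeries.X 1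

/-- The Chern polynomial `c(E;t) = ∑_{i=0}^{e} cᵢ(E) tⁱ` evaluated at `t`. -/
noncomputable def cpoly (c : ℕ → R) (e : ℕ) (t : MvPowerSeries (Fin 2) R) :
    MvPowerSeries (Fin 2) R :=
  ∑ i ∈ Finset.range (e + 1), MvPowerSeries.C (c i) * t ^ i

/-- The full Segre series
`S(E-F;u) = (1+βu⁻¹)⁻¹ c(E;β)c(F;-u)/(c(E;-u)c(F;β))` in `R[[v,u]]`. -/
noncomputable def segreSeries (cE : ℕ → R) (e : ℕ) (cF : ℕ → R) (f : ℕ) :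
    MvPowerSeries (Fin 2) R :=
  (cpoly R cE e (u R * v R) * cpoly R cF f (-(u R))) *
    MvPowerSeries.invOfUnit
      ((1 + v R) * cpoly R cE e (-(u R)) * cpoly R cF f (u R * v R)) 1

/-- The Segre class `S_m(E-F)` as a power series in `β`. -/
noncomputable def segreClass (cE : ℕ → R) (e : ℕ) (cF : ℕ → R) (f : ℕ)
    (m : ℤ) : PowerSeries R :=
  PowerSeries.mk fun k =>
    if 0 ≤ m + (k : ℤ) then
      MvPowerSeries.coeff
        (Finsupp.single (0 : Fin 2) k
          + Finsupp.single (1 : Fin 2) (m + (k : ℤ)).toNat)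
        (segreSeries R cE e cF f)
    else 0

/-- `S_m(E)`, the Segre class of `E` alone. -/
noncomputable def segreClassE (cE : ℕ → R) (e : ℕ) (m : ℤ) : PowerSeries R :=
  segreClass R cE e (fun i => if i = 0 then 1 else 0) 0 m

/-- `ȳⱼ = -yⱼ/(1+βyⱼ)` for a Chern root `yⱼ` of `F`, as a power series in `β`. -/
noncomputable def rootBar (y : R) : PowerSeries R :=
  (-(PowerSeries.C y)) *
    PowerSeries.invOfUnit (1 + PowerSeries.C y * PowerSeries.X) 1

/-- `c_p(F^∨)`: the `p`-th elementary symmetric polynomial of the `ȳⱼ`. -/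
noncomputable def chernDual (f : ℕ) (y : Fin f → R) (p : ℕ) : PowerSeries R :=
  ∑ s ∈ Finset.univ.powersetCard p, ∏ j ∈ s, rootBar R (y j)


open Finset

noncomputable def d2 (a b : ℕ) : Fin 2 →₀ ℕ := Finsupp.single 0 a + Finsupp.single 1 b

lemma d2_apply0 (a b : ℕ) : d2 a b 0 = a := by
  simp [d2, Finsupp.single_apply]

lemma d2_apply1 (a b : ℕ) : d2 a b 1 = b := by
  simp [d2, Finsupp.single_apply]

lemma eq_d2 (n : Fin 2 →₀ ℕ) : n = d2 (n 0) (n 1) := by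
  ext i
  fin_cases i <;> simp [d2, Finsupp.single_apply]

lemma d2_add (a b c d : ℕ) : d2 a b + d2 c d = d2 (a + c) (b + d) := by
  ext i; fin_cases i <;> simp [d2, Finsupp.single_apply]

lemma d2_inj {a b c d : ℕ} : d2 a b = d2 c d ↔ a = c ∧ b = d := by
  constructor
  · intro h
    constructor
    · have := congrArg (fun g => g 0) h; simpa [d2_apply0] using this
    · have := congrArg (fun g => g 1) h; simpa [d2_apply1] using this
  · rintro ⟨rfl, rfl⟩; rfl

lemma d2_zero : d2 0 0 = (0 : Fin 2 →₀ ℕ) := by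
  ext i; fin_cases i <;> simp [d2]

lemma sum_antidiagonal_d2 {M : Type*} [AddCommMonoid M] (k w : ℕ)
    (F : (Fin 2 →₀ ℕ) → (Fin 2 →₀ ℕ) → M) :
    ∑ p ∈ Finset.HasAntidiagonal.antidiagonal (d2 k w), F p.1 p.2
      = ∑ i ∈ range (k+1), ∑ j ∈ range (w+1), F (d2 i j) (d2 (k-i) (w-j)) := by
  rw [← Finset.sum_product']
  refine Finset.sum_nbij' (fun p => (p.1 0, p.1 1))
    (fun q => (d2 q.1 q.2, d2 (k - q.1) (w - q.2))) ?_ ?_ ?_ ?_ ?_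
  · intro p hp
    rw [Finset.HasAntidiagonal.mem_antidiagonal] at hp
    have h0 : p.1 0 + p.2 0 = k := by
      have := congrArg (fun g => g 0) hp; simpa [d2_apply0] using this
    have h1 : p.1 1 + p.2 1 = w := by
      have := congrArg (fun g => g 1) hp; simpa [d2_apply1] using this
    simp only [Finset.mem_product, Finset.mem_range]
    omega
  · intro q hq
    simp only [Finset.mem_product, Finset.mem_range] at hq
    rw [Finset.HasAntidiagonal.mem_antidiagonal, d2_add]
    rw [d2_inj]
    omega
  · intro p hp
    rw [Finset.HasAntidiagonal.mem_antidiagonal] at hp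
    have h0 : p.1 0 + p.2 0 = k := by
      have := congrArg (fun g => g 0) hp; simpa [d2_apply0] using this
    have h1 : p.1 1 + p.2 1 = w := by
      have := congrArg (fun g => g 1) hp; simpa [d2_apply1] using this
    have e1 : p.1 = d2 (p.1 0) (p.1 1) := eq_d2 _
    have e2 : p.2 = d2 (k - p.1 0) (w - p.1 1) := by
      rw [eq_d2 p.2]; rw [d2_inj]; omega
    exact Prod.ext e1.symm e2.symm
  · intro q hq
    simp only [d2_apply0, d2_apply1]
  · intro p hp
    rw [Finset.HasAntidiagonal.mem_antidiagonal] at hp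
    have h0 : p.1 0 + p.2 0 = k := by
      have := congrArg (fun g => g 0) hp; simpa [d2_apply0] using this
    have h1 : p.1 1 + p.2 1 = w := by
      have := congrArg (fun g => g 1) hp; simpa [d2_apply1] using this
    have e1 : p.1 = d2 (p.1 0) (p.1 1) := eq_d2 _
    have e2 : p.2 = d2 (k - p.1 0) (w - p.1 1) := by
      rw [eq_d2 p.2]; rw [d2_inj]; omega
    rw [← e1, ← e2]

lemma coeff_mul_d2 (k w : ℕ) (S T : MvPowerSeries (Fin 2) R) :
    MvPowerSeries.coeff (d2 k w) (S * T)
      = ∑ i ∈ range (k+1), ∑ j ∈ range (w+1),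
          MvPowerSeries.coeff (d2 i j) S * MvPowerSeries.coeff (d2 (k-i) (w-j)) T := by
  rw [MvPowerSeries.coeff_mul]
  exact sum_antidiagonal_d2 (M := R) k w fun a b =>
    MvPowerSeries.coeff a S * MvPowerSeries.coeff b T

noncomputable def phiFun (P : PowerSeries R) : MvPowerSeries (Fin 2) R :=
  fun n => if n 0 = n 1 then PowerSeries.coeff (n 0) P else 0

lemma coeff_phiFun (P : PowerSeries R) (a b : ℕ) :
    MvPowerSeries.coeff (d2 a b) (phiFun R P)
      = if a = b then PowerSeries.coeff a P else 0 := by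
  have : MvPowerSeries.coeff (d2 a b) (phiFun R P)
      = if (d2 a b) 0 = (d2 a b) 1 then PowerSeries.coeff ((d2 a b) 0) P else 0 := rfl
  rw [this, d2_apply0, d2_apply1]

noncomputable def phi : PowerSeries R →+* MvPowerSeries (Fin 2) R where
  toFun := phiFun R
  map_one' := by
    apply MvPowerSeries.ext; intro n
    obtain ⟨a, b, rfl⟩ : ∃ a b, n = d2 a b := ⟨n 0, n 1, eq_d2 n⟩
    rw [coeff_phiFun, MvPowerSeries.coeff_one, ← d2_zero]
    simp only [d2_inj, PowerSeries.coeff_one]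
    split_ifs <;> simp_all
  map_mul' := by
    intro P Q
    apply MvPowerSeries.ext; intro n
    obtain ⟨a, b, rfl⟩ : ∃ a b, n = d2 a b := ⟨n 0, n 1, eq_d2 n⟩
    rw [coeff_mul_d2, coeff_phiFun, PowerSeries.coeff_mul,
      Finset.Nat.sum_antidiagonal_eq_sum_range_succ_mk]
    have hcol : ∀ i ∈ Finset.range (a+1),
        (∑ j ∈ Finset.range (b+1), MvPowerSeries.coeff (d2 i j) (phiFun R P) *
          MvPowerSeries.coeff (d2 (a-i) (b-j)) (phiFun R Q))
        = if i ≤ b then (PowerSeries.coeff i P) *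
            (if a - i = b - i then PowerSeries.coeff (a-i) Q else 0) else 0 := by
      intro i _
      have hterm : ∀ j ∈ Finset.range (b+1),
          MvPowerSeries.coeff (d2 i j) (phiFun R P) *
            MvPowerSeries.coeff (d2 (a-i) (b-j)) (phiFun R Q)
          = if i = j then (PowerSeries.coeff i P) *
              (if a - i = b - j then PowerSeries.coeff (a-i) Q else 0) else 0 := by
        intro j _
        rw [coeff_phiFun, coeff_phiFun, ite_mul, zero_mul]
      rw [Finset.sum_congr rfl hterm, Finset.sum_ite_eq]
      simp [Nat.lt_succ_iff]
    rw [Finset.sum_congr rfl hcol]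
    by_cases hab : a = b
    · rw [if_pos hab]
      apply Finset.sum_congr rfl
      intro i hi
      rw [Finset.mem_range, Nat.lt_succ_iff] at hi
      subst hab
      rw [if_pos hi, if_pos rfl]
    · rw [if_neg hab]
      symm
      apply Finset.sum_eq_zero
      intro i hi
      rw [Finset.mem_range, Nat.lt_succ_iff] at hi
      split_ifs with h1 h2
      · omega
      · exact mul_zero _
      · rfl
  map_zero' := by
    apply MvPowerSeries.ext; intro n
    obtain ⟨a, b, rfl⟩ : ∃ a b, n = d2 a b := ⟨n 0, n 1, eq_d2 n⟩
    rw [coeff_phiFun, map_zero, map_zero]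
    split_ifs <;> simp
  map_add' := by
    intro P Q
    apply MvPowerSeries.ext; intro n
    obtain ⟨a, b, rfl⟩ : ∃ a b, n = d2 a b := ⟨n 0, n 1, eq_d2 n⟩
    rw [map_add, coeff_phiFun, coeff_phiFun, coeff_phiFun, map_add]
    split_ifs <;> simp

lemma coeff_phi (P : PowerSeries R) (a b : ℕ) :
    MvPowerSeries.coeff (d2 a b) (phi R P)
      = if a = b then PowerSeries.coeff a P else 0 := coeff_phiFun R P a b

lemma phi_C (r : R) : phi R (PowerSeries.C r) = MvPowerSeries.C r := by
  apply MvPowerSeries.ext; intro n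
  obtain ⟨a, b, rfl⟩ : ∃ a b, n = d2 a b := ⟨n 0, n 1, eq_d2 n⟩
  rw [coeff_phi]
  rw [show (MvPowerSeries.C r) = MvPowerSeries.monomial 0 r from rfl]
  rw [MvPowerSeries.coeff_monomial, PowerSeries.coeff_C, ← d2_zero]
  simp only [d2_inj]
  split_ifs <;> simp_all

lemma u_mul_v : u R * v R = MvPowerSeries.monomial (d2 1 1) 1 := by
  rw [u, v, MvPowerSeries.X, MvPowerSeries.X, MvPowerSeries.monomial_mul_monomial, one_mul]
  congr 1
  rw [d2, add_comm]

lemma phi_X : phi R PowerSeries.X = u R * v R := by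
  rw [u_mul_v]
  apply MvPowerSeries.ext; intro n
  obtain ⟨a, b, rfl⟩ : ∃ a b, n = d2 a b := ⟨n 0, n 1, eq_d2 n⟩
  rw [coeff_phi, MvPowerSeries.coeff_monomial, PowerSeries.coeff_X]
  simp only [d2_inj]
  split_ifs <;> simp_all



/-- The coefficient-extraction operator: `(T m S)_k` is the coefficient of
`v^k u^(m+k)` in `S` (or `0` if `m + k < 0`). -/
noncomputable def T (m : ℤ) : MvPowerSeries (Fin 2) R →ₗ[R] PowerSeries R where
  toFun S := PowerSeries.mk fun k =>
    if 0 ≤ m + (k : ℤ) then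
      MvPowerSeries.coeff (d2 k (m + (k : ℤ)).toNat) S
    else 0
  map_add' S T := by
    ext k
    simp only [PowerSeries.coeff_mk, map_add]
    split_ifs <;> simp
  map_smul' r S := by
    ext k
    simp only [PowerSeries.coeff_mk, MvPowerSeries.coeff_smul, PowerSeries.coeff_smul,
      RingHom.id_apply, smul_eq_mul]
    split_ifs <;> simp

lemma coeff_T (m : ℤ) (S : MvPowerSeries (Fin 2) R) (k : ℕ) :
    PowerSeries.coeff k (T R m S)
      = if 0 ≤ m + (k : ℤ) then
          MvPowerSeries.coeff (d2 k (m + (k : ℤ)).toNat) S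
        else 0 := by
  simp [T, PowerSeries.coeff_mk]

lemma segreClass_eq_T (cE : ℕ → R) (e : ℕ) (cF : ℕ → R) (f : ℕ) (m : ℤ) :
    segreClass R cE e cF f m = T R m (segreSeries R cE e cF f) := rfl

lemma T_phi (m : ℤ) (P : PowerSeries R) (S : MvPowerSeries (Fin 2) R) :
    T R m (phi R P * S) = P * T R m S := by
  ext k
  rw [coeff_T, PowerSeries.coeff_mul,
    Finset.Nat.sum_antidiagonal_eq_sum_range_succ
      (fun x y => PowerSeries.coeff x P * PowerSeries.coeff y (T R m S)) k]
  by_cases hmk : 0 ≤ m + (k : ℤ)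
  · rw [if_pos hmk]
    set w := (m + (k : ℤ)).toNat with hw
    rw [coeff_mul_d2]
    have hcol : ∀ i ∈ Finset.range (k+1),
        (∑ j ∈ Finset.range (w+1), MvPowerSeries.coeff (d2 i j) (phi R P) *
          MvPowerSeries.coeff (d2 (k-i) (w-j)) S)
        = if i ≤ w then (PowerSeries.coeff i P) *
            MvPowerSeries.coeff (d2 (k-i) (w-i)) S else 0 := by
      intro i _
      have hterm : ∀ j ∈ Finset.range (w+1),
          MvPowerSeries.coeff (d2 i j) (phi R P) *
            MvPowerSeries.coeff (d2 (k-i) (w-j)) S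
          = if i = j then (PowerSeries.coeff i P) *
              MvPowerSeries.coeff (d2 (k-i) (w-j)) S else 0 := by
        intro j _
        rw [coeff_phi, ite_mul, zero_mul]
      rw [Finset.sum_congr rfl hterm, Finset.sum_ite_eq]
      simp [Nat.lt_succ_iff]
    rw [Finset.sum_congr rfl hcol]
    apply Finset.sum_congr rfl
    intro i hi
    rw [Finset.mem_range, Nat.lt_succ_iff] at hi
    rw [coeff_T]
    by_cases hiw : i ≤ w
    · rw [if_pos hiw]
      have hcond : 0 ≤ m + ((k - i : ℕ) : ℤ) := by
        rw [Nat.cast_sub hi]; omega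
      rw [if_pos hcond]
      have harg : (m + ((k - i : ℕ) : ℤ)).toNat = w - i := by
        rw [Nat.cast_sub hi]; omega
      rw [harg]
    · rw [if_neg hiw]
      have hcond : ¬ (0 ≤ m + ((k - i : ℕ) : ℤ)) := by
        rw [Nat.cast_sub hi]; omega
      rw [if_neg hcond, mul_zero]
  · rw [if_neg hmk]
    symm
    apply Finset.sum_eq_zero
    intro i hi
    rw [Finset.mem_range, Nat.lt_succ_iff] at hi
    rw [coeff_T]
    have hcond : ¬ (0 ≤ m + ((k - i : ℕ) : ℤ)) := by
      rw [Nat.cast_sub hi]; omega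
    rw [if_neg hcond, mul_zero]

lemma d2_zero_left (r : ℕ) : d2 0 r = Finsupp.single 1 r := by
  rw [d2, Finsupp.single_zero, zero_add]

lemma u_pow (r : ℕ) : (u R) ^ r = MvPowerSeries.monomial (d2 0 r) 1 := by
  rw [u, MvPowerSeries.X_pow_eq, d2_zero_left]

lemma T_shift (m : ℤ) (r : ℕ) (S : MvPowerSeries (Fin 2) R) :
    T R m ((u R) ^ r * S) = T R (m - r) S := by
  ext k
  rw [coeff_T, coeff_T]
  by_cases hmk : 0 ≤ m + (k : ℤ)
  · rw [if_pos hmk]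
    set w := (m + (k : ℤ)).toNat with hw
    rw [coeff_mul_d2, u_pow]
    have hcol : ∀ i ∈ Finset.range (k+1),
        (∑ j ∈ Finset.range (w+1),
            MvPowerSeries.coeff (d2 i j) (MvPowerSeries.monomial (d2 0 r) 1) *
              MvPowerSeries.coeff (d2 (k-i) (w-j)) S)
        = if i = 0 then (if r ≤ w then MvPowerSeries.coeff (d2 k (w-r)) S else 0) else 0 := by
      intro i _
      have hterm : ∀ j ∈ Finset.range (w+1),
          MvPowerSeries.coeff (d2 i j) (MvPowerSeries.monomial (d2 0 r) 1) *
            MvPowerSeries.coeff (d2 (k-i) (w-j)) S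
          = if i = 0 then (if j = r then MvPowerSeries.coeff (d2 (k-i) (w-j)) S else 0)
            else 0 := by
        intro j _
        rw [MvPowerSeries.coeff_monomial]
        simp only [d2_inj]
        split_ifs <;> simp_all
      rw [Finset.sum_congr rfl hterm]
      by_cases hi0 : i = 0
      · subst hi0
        simp only [eq_self_iff_true, if_true, Nat.sub_zero]
        rw [Finset.sum_ite_eq']
        simp only [Finset.mem_range, Nat.lt_succ_iff]
      · simp [hi0]
    rw [Finset.sum_congr rfl hcol, Finset.sum_ite_eq']
    simp only [Finset.mem_range, Nat.lt_succ_iff, Nat.zero_le, if_pos]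
    by_cases hr : r ≤ w
    · rw [if_pos hr]
      have hc2 : 0 ≤ m - r + (k : ℤ) := by omega
      rw [if_pos hc2]
      have harg : (m - r + (k : ℤ)).toNat = w - r := by omega
      rw [harg]
    · rw [if_neg hr]
      have hc2 : ¬ (0 ≤ m - r + (k : ℤ)) := by omega
      rw [if_neg hc2]
  · rw [if_neg hmk]
    have hc2 : ¬ (0 ≤ m - r + (k : ℤ)) := by omega
    rw [if_neg hc2]


lemma prod_one_add {A : Type*} [CommRing A] {f : ℕ} (z : Fin f → A) (t : A) :
    ∏ j : Fin f, (1 + z j * t)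
      = ∑ p ∈ range (f+1), (∑ s ∈ Finset.univ.powersetCard p, ∏ j ∈ s, z j) * t ^ p := by
  have h1 : ∀ j : Fin f, 1 + z j * t = z j * t + 1 := fun j => add_comm _ _
  simp_rw [h1]
  rw [Finset.prod_add]
  have h2 : ∀ s : Finset (Fin f), (∏ j ∈ s, (z j * t)) * ∏ _j ∈ Finset.univ \ s, (1:A)
      = (∏ j ∈ s, z j) * t ^ s.card := by
    intro s
    rw [Finset.prod_const_one, mul_one, Finset.prod_mul_distrib, Finset.prod_const]
  rw [Finset.sum_congr rfl fun s _ => h2 s]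
  rw [Finset.sum_powerset]
  rw [Finset.card_univ, Fintype.card_fin]
  apply Finset.sum_congr rfl
  intro p _
  rw [Finset.sum_mul]
  apply Finset.sum_congr rfl
  intro s hs
  rw [(Finset.mem_powersetCard.mp hs).2]

lemma cpoly_esymm (f : ℕ) (y : Fin f → R) (t : MvPowerSeries (Fin 2) R) :
    cpoly R (fun p => ∑ s ∈ Finset.univ.powersetCard p, ∏ j ∈ s, y j) f t
      = ∏ j : Fin f, (1 + MvPowerSeries.C (y j) * t) := by
  rw [prod_one_add]
  unfold cpoly
  apply Finset.sum_congr rfl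
  intro p _
  congr 1
  rw [map_sum]
  exact Finset.sum_congr rfl fun s _ => map_prod _ _ _

lemma cpoly_delta (t : MvPowerSeries (Fin 2) R) :
    cpoly R (fun i => if i = 0 then (1:R) else 0) 0 t = 1 := by
  unfold cpoly
  simp

lemma constantCoeff_cpoly (c : ℕ → R) (e : ℕ) (t : MvPowerSeries (Fin 2) R)
    (ht : MvPowerSeries.constantCoeff t = 0) :
    MvPowerSeries.constantCoeff (cpoly R c e t) = c 0 := by
  unfold cpoly
  rw [map_sum, Finset.sum_eq_single 0]
  · simp
  · intro i hi hne
    rw [map_mul, map_pow, ht, zero_pow hne, mul_zero]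
  · intro h; simp at h

lemma constantCoeff_u : MvPowerSeries.constantCoeff (u R) = 0 := by
  rw [u]; exact MvPowerSeries.constantCoeff_X _

lemma constantCoeff_v : MvPowerSeries.constantCoeff (v R) = 0 := by
  rw [v]; exact MvPowerSeries.constantCoeff_X _

lemma root_identity (y : R) :
    (1 + phi R (rootBar R y) * (u R + u R * v R)) *
        (1 + MvPowerSeries.C y * (u R * v R))
      = 1 + MvPowerSeries.C y * (-(u R)) := by
  have h1 : phi R (1 + PowerSeries.C y * PowerSeries.X)
      = 1 + MvPowerSeries.C y * (u R * v R) := by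
    rw [map_add, map_one, map_mul, phi_C, phi_X]
  have hinv : (1 + MvPowerSeries.C y * (u R * v R)) *
      phi R (PowerSeries.invOfUnit (1 + PowerSeries.C y * PowerSeries.X) 1) = 1 := by
    rw [← h1, ← map_mul, PowerSeries.mul_invOfUnit, map_one]
    simp
  rw [rootBar, map_mul, map_neg, phi_C]
  linear_combination (-(MvPowerSeries.C y) * (u R + u R * v R)) * hinv


lemma hSE (cE : ℕ → R) (e : ℕ) :
    segreSeries R cE e (fun i => if i = 0 then (1:R) else 0) 0
      = cpoly R cE e (u R * v R) *
          MvPowerSeries.invOfUnit ((1 + v R) * cpoly R cE e (-(u R))) 1 := by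
  unfold segreSeries
  rw [cpoly_delta, cpoly_delta, mul_one, mul_one]

lemma key (cE : ℕ → R) (e : ℕ) (f : ℕ) (y : Fin f → R) (hcE0 : cE 0 = 1) :
    segreSeries R cE e (fun p => ∑ s ∈ Finset.univ.powersetCard p, ∏ j ∈ s, y j) f
      = (∑ p ∈ range (f+1), phi R (chernDual R f y p) * (u R + u R * v R) ^ p) *
          segreSeries R cE e (fun i => if i = 0 then 1 else 0) 0 := by
  rw [hSE]
  set cF : ℕ → R := fun p => ∑ s ∈ Finset.univ.powersetCard p, ∏ j ∈ s, y j with hcF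
  unfold segreSeries
  set NE := cpoly R cE e (u R * v R) with hNE
  set W1 := (1 + v R) * cpoly R cE e (-(u R)) with hW1def
  set W2 := cpoly R cF f (u R * v R) with hW2def
  set Sg := ∑ p ∈ range (f+1), phi R (chernDual R f y p) * (u R + u R * v R) ^ p with hSg
  have hc2 : MvPowerSeries.constantCoeff W1 = 1 := by
    rw [hW1def, map_mul, map_add, map_one, constantCoeff_v, add_zero, one_mul,
      constantCoeff_cpoly]
    · exact hcE0
    · rw [map_neg, constantCoeff_u, neg_zero]
  have hcF0 : cF 0 = 1 := by
    rw [hcF]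
    simp
  have hc1 : MvPowerSeries.constantCoeff (W1 * W2) = 1 := by
    rw [map_mul, hc2, one_mul, hW2def, constantCoeff_cpoly]
    · exact hcF0
    · rw [map_mul, constantCoeff_u, zero_mul]
  have h1 : (W1 * W2) * MvPowerSeries.invOfUnit (W1 * W2) 1 = 1 :=
    MvPowerSeries.mul_invOfUnit _ _ (by rw [hc1, Units.val_one])
  have h2 : W1 * MvPowerSeries.invOfUnit W1 1 = 1 :=
    MvPowerSeries.mul_invOfUnit _ _ (by rw [hc2, Units.val_one])
  have hP : Sg * W2 = cpoly R cF f (-(u R)) := by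
    have e1 : Sg = ∏ j : Fin f, (1 + phi R (rootBar R (y j)) * (u R + u R * v R)) := by
      rw [hSg, prod_one_add]
      apply Finset.sum_congr rfl
      intro p _
      congr 1
      rw [chernDual, map_sum]
      exact Finset.sum_congr rfl fun s _ => map_prod _ _ _
    rw [e1, hW2def, hcF, cpoly_esymm, cpoly_esymm, ← Finset.prod_mul_distrib]
    exact Finset.prod_congr rfl fun j _ => root_identity R (y j)
  set I1 := MvPowerSeries.invOfUnit (W1 * W2) 1 with hI1
  set I2 := MvPowerSeries.invOfUnit W1 1 with hI2
  linear_combination (-(NE * I1)) * hP + (NE * Sg * I2) * h1 + (-(NE * Sg * W2 * I1)) * h2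


/-- identity (2.3):
`S_m(E-F) = ∑_{p=0}^{rk F} c_p(F^∨) ∑_{q=0}^{p} C(p,q) β^q S_{m-p+q}(E)`,
where `F` has Chern roots `y₁,…,y_f`, so `c_p(F) = e_p(y)` and
`c_p(F^∨) = e_p(ȳ)` with `ȳⱼ = -yⱼ/(1+βyⱼ)`. -/
theorem segre_relation_2_3 (cE : ℕ → R) (e : ℕ) (f : ℕ) (y : Fin f → R)
    (hcE0 : cE 0 = 1) :
    ∀ m : ℤ,
      segreClass R cE e
          (fun p => ∑ s ∈ Finset.univ.powersetCard p, ∏ j ∈ s, y j) f m =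
        ∑ p ∈ Finset.range (f + 1),
          chernDual R f y p *
            ∑ q ∈ Finset.range (p + 1),
              ((p.choose q : ℕ) : PowerSeries R) * PowerSeries.X ^ q *
                segreClassE R cE e (m - p + q) := by
  intro m
  rw [segreClass_eq_T, key R cE e f y hcE0]
  rw [Finset.sum_mul, map_sum]
  apply Finset.sum_congr rfl
  intro p _
  rw [mul_assoc, T_phi]
  congr 1
  set SE := segreSeries R cE e (fun i => if i = 0 then (1:R) else 0) 0 with hSEdef
  have hadd : (u R + u R * v R) ^ p
      = ∑ q ∈ range (p+1),
          (u R * v R) ^ q * (u R) ^ (p - q) * ((p.choose q : ℕ) : MvPowerSeries (Fin 2) R) := by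
    rw [add_comm (u R), add_pow]
  rw [hadd, Finset.sum_mul, map_sum]
  apply Finset.sum_congr rfl
  intro q hq
  rw [Finset.mem_range, Nat.lt_succ_iff] at hq
  have hre : (u R * v R) ^ q * (u R) ^ (p - q) * ((p.choose q : ℕ) : MvPowerSeries (Fin 2) R) * SE
      = phi R (PowerSeries.X ^ q) * ((u R) ^ (p - q) * ((p.choose q : ℕ) • SE)) := by
    rw [map_pow, phi_X, nsmul_eq_mul]
    ring
  rw [hre, T_phi, T_shift, map_nsmul]
  have hm : m - ((p - q : ℕ) : ℤ) = m - p + q := by omega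
  rw [hm]
  have hSC : T R (m - p + q) SE = segreClassE R cE e (m - p + q) := rfl
  rw [hSC, nsmul_eq_mul]
  ring

end Segre
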